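/- Let a : ℤ → (ℤ → ℂ) be a family of bounded sequences, let X_i := diag(a i) for each i ∈ ℤ, and define b : ℤ → (ℤ → ℂ) by b_i(j) := a_j(i). Then the joint spectrum of the commuting family {X_i}_{i∈ℤ} — that is, the set of all λ ∈ ℂ^ℤ such that for every finite subset Γ ⊆ ℤ the operator ∑_{i∈Γ} (X_i − λ_i·1)(X_i − λ_i·1)* + (X_i − λ_i·1)*(X_i − λ_i·1) is not invertible in the algebra of bounded operators on ℓ²(ℤ) — is equal to the closure of the set {b_i : i ∈ ℤ} in ℂ^ℤ equipped with the product topology. -/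

import Mathlib

/-- The Hilbert space ℓ²(ℤ) of square-summable complex sequences. -/
noncomputable abbrev H : Type := lp (fun _ : ℤ => ℂ) 2

open scoped ComplexConjugate ENNReal InnerProductSpace

namespace JS

lemma memlp_diag (d : ℤ → ℂ) (C : ℝ) (hd : ∀ j, ‖d j‖ ≤ C) (f : H) :
    Memℓp (fun j => d j * f j) 2 := by
  have hC : 0 ≤ C := (norm_nonneg (d 0)).trans (hd 0)
  apply memℓp_gen
  have hs : Summable fun j : ℤ => ‖f j‖ ^ (2 : ℝ≥0∞).toReal :=
    (lp.memℓp f).summable (by norm_num)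
  refine ((hs.mul_left (C ^ (2 : ℝ≥0∞).toReal)).of_nonneg_of_le
    (fun j => Real.rpow_nonneg (norm_nonneg _) _) (fun j => ?_))
  rw [norm_mul, ← Real.mul_rpow hC (norm_nonneg _)]
  exact Real.rpow_le_rpow (by positivity)
    (mul_le_mul_of_nonneg_right (hd j) (norm_nonneg _)) (by norm_num)

/-- The diagonal operator on ℓ². -/
noncomputable def diag (d : ℤ → ℂ) (C : ℝ) (hd : ∀ j, ‖d j‖ ≤ C) : H →L[ℂ] H :=
  LinearMap.mkContinuous
    { toFun := fun f => ⟨fun j => d j * f j, memlp_diag d C hd f⟩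
      map_add' := fun f g => by
        ext j
        simp [mul_add]
        rfl
      map_smul' := fun c f => by
        ext j
        simp [lp.coeFn_smul]
        ring }
    C
    (fun f => by
      have hC : 0 ≤ C := (norm_nonneg (d 0)).trans (hd 0)
      apply lp.norm_le_of_forall_sum_le (by norm_num) (by positivity)
      intro s
      have h1 : ∀ j ∈ s, ‖d j * f j‖ ^ (2 : ℝ≥0∞).toReal
          ≤ C ^ (2 : ℝ≥0∞).toReal * ‖f j‖ ^ (2 : ℝ≥0∞).toReal := by
        intro j _
        rw [norm_mul, ← Real.mul_rpow hC (norm_nonneg _)]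
        exact Real.rpow_le_rpow (by positivity)
          (mul_le_mul_of_nonneg_right (hd j) (norm_nonneg _)) (by norm_num)
      calc ∑ j ∈ s, ‖d j * f j‖ ^ (2 : ℝ≥0∞).toReal
          ≤ ∑ j ∈ s, C ^ (2 : ℝ≥0∞).toReal * ‖f j‖ ^ (2 : ℝ≥0∞).toReal :=
            Finset.sum_le_sum h1
        _ = C ^ (2 : ℝ≥0∞).toReal * ∑ j ∈ s, ‖f j‖ ^ (2 : ℝ≥0∞).toReal := by
            rw [Finset.mul_sum]
        _ ≤ C ^ (2 : ℝ≥0∞).toReal * ‖f‖ ^ (2 : ℝ≥0∞).toReal := by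
            apply mul_le_mul_of_nonneg_left (lp.sum_rpow_le_norm_rpow (by norm_num) f s)
            positivity
        _ = (C * ‖f‖) ^ (2 : ℝ≥0∞).toReal := by
            rw [Real.mul_rpow hC (norm_nonneg _)])

@[simp] lemma diag_apply (d : ℤ → ℂ) (C : ℝ) (hd : ∀ j, ‖d j‖ ≤ C) (f : H) (j : ℤ) :
    diag d C hd f j = d j * f j := rfl


lemma diag_single (A : H →L[ℂ] H) (c : ℤ → ℂ) (hA : ∀ (f : H) (j : ℤ), A f j = c j * f j)
    (j : ℤ) : A (lp.single 2 j (1 : ℂ)) = c j • lp.single 2 j (1 : ℂ) := by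
  apply lp.ext
  funext j'
  rw [hA, lp.coeFn_smul, Pi.smul_apply]
  by_cases h : j' = j
  · subst h; simp [lp.single_apply_self]
  · simp [lp.single_apply_ne 2 j _ h, Pi.single_apply, h]

lemma star_diag (A : H →L[ℂ] H) (c : ℤ → ℂ) (hA : ∀ (f : H) (j : ℤ), A f j = c j * f j)
    (f : H) (j : ℤ) : (star A) f j = conj (c j) * f j := by
  have h1 : ⟪(lp.single 2 j (1 : ℂ) : H), (star A) f⟫_ℂ = ((star A) f) j := by
    rw [lp.inner_single_left]
    simp [RCLike.inner_apply]
  rw [← h1, ContinuousLinearMap.star_eq_adjoint, ContinuousLinearMap.adjoint_inner_right,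
    diag_single A c hA, inner_smul_left, lp.inner_single_left]
  simp [RCLike.inner_apply]

lemma isUnit_diag_iff (S : H →L[ℂ] H) (D : ℤ → ℝ) (hD : ∀ j, 0 ≤ D j)
    (hS : ∀ (f : H) (j : ℤ), S f j = (D j : ℂ) * f j) :
    IsUnit S ↔ ∃ ε > 0, ∀ j, ε ≤ D j := by
  constructor
  · rintro ⟨u, rfl⟩
    set B : H →L[ℂ] H := ↑u⁻¹ with hB
    refine ⟨(‖B‖ + 1)⁻¹, by positivity, fun j => ?_⟩
    have hBS : ∀ x : H, B ((↑u : H →L[ℂ] H) x) = x := by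
      intro x
      have : B * ↑u = 1 := by rw [hB, ← Units.val_mul, inv_mul_cancel]; rfl
      calc B ((↑u : H →L[ℂ] H) x) = (B * ↑u) x := rfl
        _ = x := by rw [this]; rfl
    have he : ‖(lp.single 2 j (1:ℂ) : H)‖ = 1 := by
      have := lp.norm_single (p := 2) (E := fun _ : ℤ => ℂ) (by norm_num)
        j (1 : ℂ)
      simpa using this
    have hsingle : (↑u : H →L[ℂ] H) (lp.single 2 j (1:ℂ)) = (D j : ℂ) • lp.single 2 j (1:ℂ) :=
      diag_single _ (fun j => (D j : ℂ)) hS j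
    have h1 : (1:ℝ) ≤ ‖B‖ * D j := by
      calc (1:ℝ) = ‖(lp.single 2 j (1:ℂ) : H)‖ := he.symm
        _ = ‖B ((↑u : H →L[ℂ] H) (lp.single 2 j (1:ℂ)))‖ := by rw [hBS]
        _ ≤ ‖B‖ * ‖(↑u : H →L[ℂ] H) (lp.single 2 j (1:ℂ))‖ := B.le_opNorm _
        _ = ‖B‖ * D j := by
            rw [hsingle, norm_smul, he, Complex.norm_real, Real.norm_of_nonneg (hD j),
              mul_one]
    have h3 : (0:ℝ) < ‖B‖ + 1 := by positivity
    have h2 : (1:ℝ) ≤ (‖B‖ + 1) * D j := by nlinarith [hD j]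
    have h4 : (‖B‖+1)⁻¹ * 1 ≤ (‖B‖+1)⁻¹ * ((‖B‖+1) * D j) :=
      mul_le_mul_of_nonneg_left h2 (by positivity)
    rwa [mul_one, ← mul_assoc, inv_mul_cancel₀ h3.ne', one_mul] at h4
  · rintro ⟨ε, hε, hεD⟩
    have hDne : ∀ j, (D j : ℂ) ≠ 0 := by
      intro j h
      rw [Complex.ofReal_eq_zero] at h
      have := hεD j; linarith
    have hbound : ∀ j, ‖((D j : ℂ))⁻¹‖ ≤ ε⁻¹ := by
      intro j
      rw [norm_inv, Complex.norm_real, Real.norm_of_nonneg (hD j)]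
      exact inv_anti₀ hε (hεD j)
    set T : H →L[ℂ] H := diag (fun j => ((D j : ℂ))⁻¹) ε⁻¹ hbound with hT
    have h1 : S * T = 1 := by
      refine ContinuousLinearMap.ext fun f => lp.ext (funext fun j => ?_)
      show S (T f) j = f j
      rw [hS, hT]
      show (D j : ℂ) * (((D j : ℂ))⁻¹ * f j) = f j
      field_simp [hDne j]
    have h2 : T * S = 1 := by
      refine ContinuousLinearMap.ext fun f => lp.ext (funext fun j => ?_)
      show T (S f) j = f j
      rw [hT]
      show ((D j : ℂ))⁻¹ * (S f j) = f j
      rw [hS]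
      field_simp [hDne j]
    exact ⟨⟨S, T, h1, h2⟩, rfl⟩
lemma mem_closure_range_iff (b : ℤ → ℤ → ℂ) (l : ℤ → ℂ) :
    l ∈ closure (Set.range b) ↔
      ∀ Γ : Finset ℤ, ∀ ε > 0, ∃ k, ∀ i ∈ Γ, dist (b k i) (l i) < ε := by
  constructor
  · intro hl Γ ε hε
    have hopen : IsOpen ((↑Γ : Set ℤ).pi fun i => Metric.ball (l i) ε) :=
      isOpen_set_pi Γ.finite_toSet fun i _ => Metric.isOpen_ball
    have hmem : l ∈ (↑Γ : Set ℤ).pi fun i => Metric.ball (l i) ε := by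
      intro i _
      simp [hε]
    obtain ⟨x, hx1, hx2⟩ := _root_.mem_closure_iff.mp hl _ hopen hmem
    obtain ⟨k, rfl⟩ := hx2
    exact ⟨k, fun i hi => hx1 i hi⟩
  · intro h
    rw [mem_closure_iff_nhds]
    intro U hU
    rw [nhds_pi, Filter.mem_pi] at hU
    obtain ⟨I, hIfin, t, ht, htU⟩ := hU
    choose εf hεf hball using fun i =>
      Metric.mem_nhds_iff.mp (ht i)
    set Γ : Finset ℤ := hIfin.toFinset with hΓ
    obtain ⟨ε, hε, hεle⟩ : ∃ ε > 0, ∀ i ∈ Γ, ε ≤ εf i := by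
      rcases Γ.eq_empty_or_nonempty with h' | h'
      · exact ⟨1, one_pos, by simp [h']⟩
      · exact ⟨Γ.inf' h' εf, (Finset.lt_inf'_iff h').mpr fun i _ => hεf i,
          fun i hi => Finset.inf'_le εf hi⟩
    obtain ⟨k, hk⟩ := h Γ ε hε
    refine ⟨b k, htU ?_, ⟨k, rfl⟩⟩
    intro i hi
    have hiΓ : i ∈ Γ := by rwa [hΓ, Set.Finite.mem_toFinset]
    exact hball i (Metric.mem_ball.mpr (lt_of_lt_of_le (hk i hiΓ) (hεle i hiΓ)))

end JS

/-- For a family `a : ℤ → (ℤ → ℂ)` of bounded sequences and the corresponding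
diagonal operators `X i = diag (a i)` on ℓ²(ℤ), the joint spectrum of the commuting family
`{X i}` equals the closure in `ℂ^ℤ` (product topology) of `{b i : i ∈ ℤ}` where
`b i j = a j i`. -/
theorem joint_spectrum_of_diagonal_family
    (a : ℤ → ℤ → ℂ) (ha : ∀ i, ∃ C : ℝ, ∀ j, ‖a i j‖ ≤ C)
    (X : ℤ → H →L[ℂ] H)
    (hX : ∀ (i : ℤ) (f : H) (j : ℤ), X i f j = a i j * f j) :
    {l : ℤ → ℂ | ∀ Γ : Finset ℤ,
        ¬ IsUnit (∑ i ∈ Γ, ((X i - l i • (1 : H →L[ℂ] H)) * star (X i - l i • 1)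
            + star (X i - l i • 1) * (X i - l i • 1)))}
      = closure (Set.range fun i : ℤ => fun j : ℤ => a j i) := by
  ext l
  simp only [Set.mem_setOf_eq]
  rw [JS.mem_closure_range_iff]
  have hns : ∀ z : ℂ, Complex.normSq z = ‖z‖ ^ 2 := fun z => by
    rw [Complex.normSq_eq_norm_sq]
  have hAi : ∀ i (f : H) (j : ℤ),
      (X i - l i • (1 : H →L[ℂ] H)) f j = (a i j - l i) * f j := by
    intro i f j
    rw [ContinuousLinearMap.sub_apply, ContinuousLinearMap.smul_apply,
      ContinuousLinearMap.one_apply, lp.coeFn_sub, Pi.sub_apply, hX,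
      lp.coeFn_smul, Pi.smul_apply, smul_eq_mul]
    ring
  have hstar : ∀ i (f : H) (j : ℤ),
      (star (X i - l i • (1 : H →L[ℂ] H))) f j = (starRingEnd ℂ) (a i j - l i) * f j :=
    fun i => JS.star_diag _ _ (hAi i)
  set D : Finset ℤ → ℤ → ℝ := fun Γ j => ∑ i ∈ Γ, 2 * Complex.normSq (a i j - l i) with hD
  have hDnn : ∀ Γ j, 0 ≤ D Γ j := fun Γ j =>
    Finset.sum_nonneg fun i _ => mul_nonneg (by norm_num) (Complex.normSq_nonneg _)
  have htm : ∀ (i : ℤ) (f : H) (j : ℤ),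
      (((X i - l i • (1 : H →L[ℂ] H)) * star (X i - l i • 1)
          + star (X i - l i • 1) * (X i - l i • 1)) f) j
        = 2 * (Complex.normSq (a i j - l i) : ℂ) * f j := by
    intro i f j
    rw [ContinuousLinearMap.add_apply, lp.coeFn_add, Pi.add_apply,
      ContinuousLinearMap.mul_apply, ContinuousLinearMap.mul_apply,
      hAi, hstar, hstar, hAi]
    set z := a i j - l i
    have hz : z * (starRingEnd ℂ) z = (Complex.normSq z : ℂ) := Complex.mul_conj z
    calc z * ((starRingEnd ℂ) z * f j) + (starRingEnd ℂ) z * (z * f j)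
        = 2 * (z * (starRingEnd ℂ) z) * f j := by ring
      _ = 2 * (Complex.normSq z : ℂ) * f j := by rw [hz]
  have hS : ∀ (Γ : Finset ℤ) (f : H) (j : ℤ),
      ((∑ i ∈ Γ, ((X i - l i • (1 : H →L[ℂ] H)) * star (X i - l i • 1)
          + star (X i - l i • 1) * (X i - l i • 1))) f) j = (D Γ j : ℂ) * f j := by
    intro Γ f j
    rw [ContinuousLinearMap.sum_apply, lp.coeFn_sum, Finset.sum_apply]
    calc ∑ i ∈ Γ, (((X i - l i • (1 : H →L[ℂ] H)) * star (X i - l i • 1)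
            + star (X i - l i • 1) * (X i - l i • 1)) f) j
        = ∑ i ∈ Γ, 2 * (Complex.normSq (a i j - l i) : ℂ) * f j :=
          Finset.sum_congr rfl fun i _ => htm i f j
      _ = (D Γ j : ℂ) * f j := by
          rw [hD]
          push_cast
          rw [Finset.sum_mul]
  have hunit : ∀ Γ : Finset ℤ,
      IsUnit (∑ i ∈ Γ, ((X i - l i • (1 : H →L[ℂ] H)) * star (X i - l i • 1)
          + star (X i - l i • 1) * (X i - l i • 1)))
        ↔ ∃ ε > 0, ∀ j, ε ≤ D Γ j :=
    fun Γ => JS.isUnit_diag_iff _ (D Γ) (hDnn Γ) (hS Γ)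
  constructor
  · intro hl Γ ε hε
    have h1 := hl Γ
    rw [hunit Γ] at h1
    push_neg at h1
    obtain ⟨j, hj⟩ := h1 (2 * ε ^ 2) (by positivity)
    refine ⟨j, fun i hi => ?_⟩
    have h2 : 2 * Complex.normSq (a i j - l i) ≤ D Γ j :=
      Finset.single_le_sum (f := fun i => 2 * Complex.normSq (a i j - l i))
        (fun i _ => mul_nonneg (by norm_num) (Complex.normSq_nonneg _)) hi
    have h3 : ‖a i j - l i‖ ^ 2 < ε ^ 2 := by
      have := hns (a i j - l i); nlinarith
    rw [dist_eq_norm]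
    nlinarith [norm_nonneg (a i j - l i)]
  · intro h Γ
    rw [hunit Γ]
    rintro ⟨ε, hε, hεD⟩
    set n : ℝ := (Γ.card : ℝ) with hn
    have hn0 : 0 ≤ n := by positivity
    set δ : ℝ := Real.sqrt (ε / (2 * (n + 1))) with hδ
    have hδpos : 0 < δ := Real.sqrt_pos.mpr (by positivity)
    obtain ⟨k, hk⟩ := h Γ δ hδpos
    have hδsq : δ ^ 2 = ε / (2 * (n + 1)) := Real.sq_sqrt (by positivity)
    have hterm : ∀ i ∈ Γ, 2 * Complex.normSq (a i k - l i) ≤ 2 * δ ^ 2 := by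
      intro i hi
      have h1 : ‖a i k - l i‖ ≤ δ := by
        have := (hk i hi).le; rwa [dist_eq_norm] at this
      have h2 : ‖a i k - l i‖ ^ 2 ≤ δ ^ 2 :=
        pow_le_pow_left₀ (norm_nonneg _) h1 2
      rw [hns]; linarith
    have hsum : D Γ k ≤ n * (2 * δ ^ 2) := by
      have := Finset.sum_le_card_nsmul Γ (fun i => 2 * Complex.normSq (a i k - l i))
        (2 * δ ^ 2) hterm
      rwa [nsmul_eq_mul] at this
    have hlt : n * (2 * δ ^ 2) < ε := by
      have h6 : δ ^ 2 * (2 * (n + 1)) = ε := by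
        rw [hδsq]
        exact div_mul_cancel₀ ε (by positivity)
      nlinarith [hδpos, h6]
    have := hεD k
    linarith
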